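/- In the setup of Proposition 8, a nonzero element h ∈ W with h ≥ 0 lies on an extreme ray of the cone W₊ (meaning: 0 ≤ g ≤ h with g ∈ W implies g = λh for some 0 ≤ λ ≤ 1) if and only if h = λ·χ_E for some λ > 0 and some equivalence class E of ∼. -/

import Mathlib

open MeasureTheory Filter

/-- Characterisation of the extreme rays of `W₊`: a nonzero `0 ≤ h ∈ W` lies on an
extreme ray iff `h` is a positive multiple of the characteristic function of an
equivalence class of `x ∼ y ↔ ∀ f ∈ W, f x = f y`. -/
theorem extreme_ray_iff_indicator
    {X : Type*} [Countable X] [MeasurableSpace X] [MeasurableSingletonClass X]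
    (w : X → ℝ) (hw : ∀ x, 0 < w x) (hsum : Summable w)
    (μ : Measure X) (hμ : ∀ x, μ {x} = ENNReal.ofReal (w x))
    (p : ENNReal) [Fact (1 ≤ p)] (hp : p ≠ ⊤)
    (W : Submodule ℝ (Lp ℝ p μ)) (hclosed : IsClosed (W : Set (Lp ℝ p μ)))
    (hlat : ∀ f ∈ W, ∀ g ∈ W, f ⊔ g ∈ W ∧ f ⊓ g ∈ W)
    (one : Lp ℝ p μ) (hone : ∀ᵐ x ∂μ, one x = 1) (hone' : one ∈ W)
    (h : Lp ℝ p μ) (hh : h ∈ W) (hh0 : 0 ≤ h) (hhne : h ≠ 0) :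
    (∀ g ∈ W, 0 ≤ g → g ≤ h → ∃ l : ℝ, 0 ≤ l ∧ l ≤ 1 ∧ g = l • h) ↔
      ∃ l : ℝ, 0 < l ∧ ∃ a : X,
        ⇑h =ᵐ[μ] Set.indicator {x | ∀ f ∈ W, f x = f a} (fun _ => l) := by
  -- every a.e. statement holds everywhere, since every singleton has positive measure
  have hae : ∀ {P : X → Prop}, (∀ᵐ x ∂μ, P x) → ∀ x, P x := by
    intro P hP x
    by_contra hx
    have h0 : μ {x} = 0 :=
      measure_mono_null (Set.singleton_subset_iff.mpr hx) (ae_iff.mp hP)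
    rw [hμ x] at h0
    exact absurd h0 (ENNReal.ofReal_pos.mpr (hw x)).ne'
  have hone1 : ∀ x, one x = 1 := hae hone
  have hpos : ∀ x, 0 ≤ h x := by
    intro x
    have := hae ((Lp.coeFn_nonneg h).mpr hh0) x
    simpa using this
  constructor
  · intro hext
    -- pick a point where h is nonzero
    have hA : ∃ a, h a ≠ 0 := by
      by_contra hc
      push_neg at hc
      have e1 : ⇑h =ᵐ[μ] (0 : X → ℝ) := Eventually.of_forall hc
      exact hhne (Lp.ext (e1.trans (Lp.coeFn_zero (E := ℝ) (p := p) (μ := μ)).symm))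
    obtain ⟨a, ha⟩ := hA
    have hl : 0 < h a := (hpos a).lt_of_ne (Ne.symm ha)
    -- Claim A: h takes only the value h a on its support
    have claimA : ∀ x, h x ≠ 0 → h x = h a := by
      intro x hx
      have hhx : 0 < h x := (hpos x).lt_of_ne (Ne.symm hx)
      set c := min (h x) (h a) with hc
      have hc0 : 0 < c := lt_min hhx hl
      have hmem : h ⊓ c • one ∈ W := (hlat h hh _ (W.smul_mem c hone')).2
      have hgc : ∀ z, (h ⊓ c • one) z = min (h z) c := by
        intro z
        have h1 := hae (Lp.coeFn_inf h (c • one)) z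
        have h2 := hae (Lp.coeFn_smul c one) z
        rw [h1]
        simp only [Pi.inf_apply, h2, Pi.smul_apply, smul_eq_mul, hone1 z, mul_one]
      have hle1 : (0 : Lp ℝ p μ) ≤ h ⊓ c • one := by
        refine (Lp.coeFn_nonneg _).mp (Eventually.of_forall fun z => ?_)
        rw [hgc z]
        exact le_min (hpos z) hc0.le
      have hle2 : h ⊓ c • one ≤ h := by
        refine (Lp.coeFn_le _ _).mp (Eventually.of_forall fun z => ?_)
        rw [hgc z]
        exact min_le_left _ _
      obtain ⟨lam, _, _, heq⟩ := hext _ hmem hle1 hle2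
      have hps : ∀ z, (h ⊓ c • one) z = lam * h z := by
        intro z
        have h3 := hae (Lp.coeFn_smul lam h) z
        rw [heq, h3, Pi.smul_apply, smul_eq_mul]
      have e1 : lam * h a = c := by
        rw [← hps a, hgc a, min_eq_right (min_le_right _ _)]
      have e2 : lam * h x = c := by
        rw [← hps x, hgc x, min_eq_right (min_le_left _ _)]
      have hlam : lam ≠ 0 := by
        intro h0
        rw [h0, zero_mul] at e1
        exact hc0.ne e1
      have := e1.trans e2.symm
      exact (mul_left_cancel₀ hlam this).symm
    -- Claim B (one-sided): no f ∈ W separates two points of the support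
    have aux : ∀ f, f ∈ W → ∀ x y, h x ≠ 0 → h y ≠ 0 → ¬ (f x < f y) := by
      intro f hf x y hx hy hlt
      have hhx := claimA x hx
      have hhy := claimA y hy
      set c := (f x + f y) / 2 with hcdef
      have hcx : f x < c := by rw [hcdef]; linarith
      have hcy : c < f y := by rw [hcdef]; linarith
      set t := (h a + 1) / (f y - c) with ht
      have ht0 : 0 < t := div_pos (by linarith) (by linarith)
      set u := (t • (f - c • one)) ⊔ 0 with hu
      have hu' : u ∈ W :=
        (hlat _ (W.smul_mem t (W.sub_mem hf (W.smul_mem c hone'))) 0 W.zero_mem).1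
      set g := u ⊓ h with hgdef
      have hg' : g ∈ W := (hlat u hu' h hh).2
      have hgz : ∀ z, g z = min (max (t * (f z - c)) 0) (h z) := by
        intro z
        have h1 := hae (Lp.coeFn_inf u h) z
        have h2 := hae (Lp.coeFn_sup (t • (f - c • one)) 0) z
        have h3 := hae (Lp.coeFn_smul t (f - c • one)) z
        have h4 := hae (Lp.coeFn_sub f (c • one)) z
        have h5 := hae (Lp.coeFn_smul c one) z
        have h6 := hae (Lp.coeFn_zero (E := ℝ) (p := p) (μ := μ)) z
        rw [hgdef, h1, Pi.inf_apply, hu, h2, Pi.sup_apply, h6, Pi.zero_apply, h3,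
          Pi.smul_apply, smul_eq_mul, h4, Pi.sub_apply, h5, Pi.smul_apply,
          smul_eq_mul, hone1 z, mul_one]
      have hle1 : (0 : Lp ℝ p μ) ≤ g := by
        refine (Lp.coeFn_nonneg _).mp (Eventually.of_forall fun z => ?_)
        rw [hgz z]
        exact le_min (le_max_right _ _) (hpos z)
      have hle2 : g ≤ h := by
        refine (Lp.coeFn_le _ _).mp (Eventually.of_forall fun z => ?_)
        rw [hgz z]
        exact min_le_right _ _
      obtain ⟨lam, _, _, heq⟩ := hext _ hg' hle1 hle2
      have hps : ∀ z, g z = lam * h z := by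
        intro z
        have h3 := hae (Lp.coeFn_smul lam h) z
        rw [heq, h3, Pi.smul_apply, smul_eq_mul]
      have ex : g x = 0 := by
        rw [hgz x]
        have : max (t * (f x - c)) 0 = 0 :=
          max_eq_right (mul_nonpos_of_nonneg_of_nonpos ht0.le (by linarith))
        rw [this]
        exact min_eq_left (hpos x)
      have ey : g y = h a := by
        rw [hgz y]
        have hne' : (f y : ℝ) - c ≠ 0 := ne_of_gt (by linarith)
        have hty : t * (f y - c) = h a + 1 := by
          rw [ht, div_mul_cancel₀ _ hne']
        rw [hty, max_eq_left (by linarith), hhy, min_eq_right (by linarith)]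
      have l0 : lam = 0 := by
        have := (hps x).symm.trans ex
        rcases mul_eq_zero.mp this with h' | h'
        · exact h'
        · exact absurd h' hx
      have l1 : lam * h a = h a := by
        rw [← hhy, ← hps y, ey, hhy]
      rw [l0, zero_mul] at l1
      exact ha l1.symm
    refine ⟨h a, hl, a, Eventually.of_forall fun z => ?_⟩
    by_cases hz : z ∈ {x | ∀ f ∈ W, f x = f a}
    · rw [Set.indicator_of_mem hz]
      exact hz h hh
    · rw [Set.indicator_of_notMem hz]
      by_contra hzz
      refine hz fun f hf => ?_
      rcases lt_trichotomy (f z) (f a) with h' | h' | h'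
      · exact absurd h' (aux f hf z a hzz ha)
      · exact h'
      · exact absurd h' (aux f hf a z ha hzz)
  · rintro ⟨l, hl, a, hind⟩ g hg hg0 hgh
    have hpt : ∀ z, h z = Set.indicator {x | ∀ f ∈ W, f x = f a} (fun _ => l) z :=
      hae hind
    have hha : h a = l := by
      rw [hpt a, Set.indicator_of_mem]
      intro f _
      rfl
    have hgp : ∀ z, 0 ≤ g z := by
      intro z
      have := hae ((Lp.coeFn_nonneg g).mpr hg0) z
      simpa using this
    have hgh' : ∀ z, g z ≤ h z := hae ((Lp.coeFn_le g h).mpr hgh)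
    refine ⟨g a / l, div_nonneg (hgp a) hl.le, ?_, ?_⟩
    · rw [div_le_one hl]
      calc g a ≤ h a := hgh' a
        _ = l := hha
    · apply Lp.ext
      have e1 : ⇑g =ᵐ[μ] (g a / l) • ⇑h := Eventually.of_forall fun z => ?_
      · exact e1.trans (Lp.coeFn_smul (g a / l) h).symm
      show g z = ((g a / l) • ⇑h) z
      rw [Pi.smul_apply, smul_eq_mul]
      by_cases hz : z ∈ {x | ∀ f ∈ W, f x = f a}
      · have h1 : h z = l := by rw [hpt z, Set.indicator_of_mem hz]
        have h2 : g z = g a := hz g hg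
        rw [h1, h2, div_mul_cancel₀ _ hl.ne']
      · have h1 : h z = 0 := by rw [hpt z, Set.indicator_of_notMem hz]
        have h2 : g z = 0 := le_antisymm (h1 ▸ hgh' z) (hgp z)
        rw [h1, h2, mul_zero]
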